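/- Let G be a DAG on V, φ : V → V' a surjective map, and < a topological order of G such that every fiber φ⁻¹({v'}) is an interval (contiguous block) of <. Then the cluster graph G' on V', with edge v'_i → v'_j (for v'_i ≠ v'_j) whenever some edge u → w of G satisfies φ(u) = v'_i and φ(w) = v'_j, is acyclic. -/

import Mathlib

/-- If every fiber of the surjective map φ is an interval (contiguous block) of a
topological order of the DAG G, then the cluster graph on V' is acyclic. -/
theorem cluster_graph_acyclic_of_contiguous_fibers {V V' : Type*} [LinearOrder V]
    (E : V → V → Prop) (hacyc : ∀ v : V, ¬ Relation.TransGen E v v)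
    (htopo : ∀ u w : V, E u w → u < w)
    (φ : V → V') (hφ : Function.Surjective φ)
    (hcontig : ∀ (v' : V') (a b c : V), φ a = v' → φ c = v' → a ≤ b → b ≤ c → φ b = v') :
    ∀ a' : V', ¬ Relation.TransGen
      (fun x' y' : V' => x' ≠ y' ∧ ∃ u w : V, E u w ∧ φ u = x' ∧ φ w = y') a' a' := by
  set R : V' → V' → Prop := fun x' y' =>
    x' ≠ y' ∧ ∀ a b : V, φ a = x' → φ b = y' → a < b with hR
  have hRtrans : Transitive R := by
    intro x y z ⟨hxy, hab⟩ ⟨hyz, hbc⟩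
    obtain ⟨b, hb⟩ := hφ y
    constructor
    · rintro rfl
      obtain ⟨a, ha⟩ := hφ x
      exact lt_irrefl a ((hab a b ha hb).trans (hbc b a hb ha))
    · intro a c ha hc
      exact (hab a b ha hb).trans (hbc b c hb hc)
  have hsub : ∀ x' y', (x' ≠ y' ∧ ∃ u w : V, E u w ∧ φ u = x' ∧ φ w = y') → R x' y' := by
    rintro x' y' ⟨hne, u, w, hE, hu, hw⟩
    refine ⟨hne, fun a b ha hb => ?_⟩
    by_contra h
    push_neg at h
    have huw := htopo u w hE
    rcases le_or_gt u b with h1 | h1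
    · exact hne ((hcontig x' u b a hu ha h1 h).symm.trans hb)
    · rcases le_or_gt a w with h2 | h2
      · exact hne (ha.symm.trans (hcontig y' b a w hb hw h h2))
      · exact hne ((hcontig x' u w a hu ha huw.le h2.le).symm.trans hw)
  intro a' htg
  have : R a' a' := by
    haveI : IsTrans V' R := ⟨hRtrans⟩
    exact Relation.transGen_eq_self (r := R) ▸ Relation.TransGen.mono hsub a' a' htg
  obtain ⟨a, ha⟩ := hφ a'
  exact lt_irrefl a (this.2 a a ha ha)
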